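/- arXiv:2509.11226 — 5 statements merged into one kernel-verified Lean document; each statement's English description precedes it below -/
import Mathlib

section
/- Assume g is monotone, i.e. a₁ ≤ a₂ and b₁ ≤ b₂ imply g(a₁,b₁) ≤ g(a₂,b₂). Then for every data list xs over X and every rule list rs, the dynamic-programming algorithm sodt_rec is correct for the size-constrained optimal decision tree problem: sodt_rec(xs, rs) is an element of genDTs(xs, rs), and E(sodt_rec(xs, rs)) ≤ E(t) for every tree t in genDTs(xs, rs). -/
open Classical

inductive DTree (X R : Type*) where
  | leaf : List X → DTree X R
  | node : DTree X R → R → DTree X R → DTree X R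

/-- Structural objective: `E (leaf xs) = f xs`, `E (node u r v) = g (E u) (E v)`. -/
noncomputable def Eobj {X R : Type*} (f : List X → ℝ) (g : ℝ → ℝ → ℝ) : DTree X R → ℝ
  | .leaf xs => f xs
  | .node u _ v => g (Eobj f g u) (Eobj f g v)

/-- `inter xs S` is the sublist of elements of `xs` lying in `S`. -/
noncomputable def inter {X : Type*} (xs : List X) (S : Set X) : List X :=
  xs.filter fun x => decide (x ∈ S)

/-- Brute-force generator of all proper decision trees with rule list `rs`. -/
noncomputable def genDTs {X R : Type*} (rplus : R → Set X)
    (splits : List R → List (List R × R × List R))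
    (hperm : ∀ rs : List R, 2 ≤ rs.length →
      ∀ p ∈ splits rs, (p.1 ++ p.2.1 :: p.2.2).Perm rs) :
    List X → List R → List (DTree X R)
  | xs, [] => [DTree.leaf xs]
  | xs, [r] => [DTree.node (DTree.leaf (inter xs (rplus r))) r
      (DTree.leaf (inter xs (rplus r)ᶜ))]
  | xs, r1 :: r2 :: rest =>
      (splits (r1 :: r2 :: rest)).attach.flatMap fun p =>
        (genDTs rplus splits hperm (inter xs (rplus p.1.2.1)) p.1.1).flatMap fun u =>
          (genDTs rplus splits hperm (inter xs (rplus p.1.2.1)ᶜ) p.1.2.2).map fun v =>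
            DTree.node u p.1.2.1 v
termination_by xs rs => rs.length
decreasing_by
  all_goals
    have h := (hperm (r1 :: r2 :: rest) (by simp) p.1 p.2).length_eq
    simp [List.length_append] at h ⊢
    omega

/-- Dynamic-programming algorithm: same recursion, keeping an `E`-minimal tree. -/
noncomputable def sodtRec {X R : Type*} (rplus : R → Set X)
    (splits : List R → List (List R × R × List R))
    (hperm : ∀ rs : List R, 2 ≤ rs.length →
      ∀ p ∈ splits rs, (p.1 ++ p.2.1 :: p.2.2).Perm rs)
    (minE : List (DTree X R) → DTree X R) :
    List X → List R → DTree X R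
  | xs, [] => DTree.leaf xs
  | xs, [r] => DTree.node (DTree.leaf (inter xs (rplus r))) r
      (DTree.leaf (inter xs (rplus r)ᶜ))
  | xs, r1 :: r2 :: rest =>
      minE ((splits (r1 :: r2 :: rest)).attach.map fun p =>
        DTree.node (sodtRec rplus splits hperm minE (inter xs (rplus p.1.2.1)) p.1.1)
          p.1.2.1
          (sodtRec rplus splits hperm minE (inter xs (rplus p.1.2.1)ᶜ) p.1.2.2))
termination_by xs rs => rs.length
decreasing_by
  all_goals
    have h := (hperm (r1 :: r2 :: rest) (by simp) p.1 p.2).length_eq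
    simp [List.length_append] at h ⊢
    omega

/-- correctness of the dynamic-programming algorithm `sodt_rec` for the
size-constrained optimal decision tree problem. -/
theorem stmt2 {X R : Type*} (rplus : R → Set X) (f : List X → ℝ) (g : ℝ → ℝ → ℝ)
    (splits : List R → List (List R × R × List R))
    (hperm : ∀ rs : List R, 2 ≤ rs.length →
      ∀ p ∈ splits rs, (p.1 ++ p.2.1 :: p.2.2).Perm rs)
    (hne : ∀ rs : List R, 2 ≤ rs.length → splits rs ≠ [])
    (minE : List (DTree X R) → DTree X R)
    (hminE : ∀ l : List (DTree X R), l ≠ [] →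
      minE l ∈ l ∧ ∀ t ∈ l, Eobj f g (minE l) ≤ Eobj f g t)
    (hg : ∀ a₁ a₂ b₁ b₂ : ℝ, a₁ ≤ a₂ → b₁ ≤ b₂ → g a₁ b₁ ≤ g a₂ b₂)
    (xs : List X) (rs : List R) :
    sodtRec rplus splits hperm minE xs rs ∈ genDTs rplus splits hperm xs rs ∧
    ∀ t ∈ genDTs rplus splits hperm xs rs,
      Eobj f g (sodtRec rplus splits hperm minE xs rs) ≤ Eobj f g t := by
  suffices H : ∀ n (rs : List R), rs.length = n → ∀ xs : List X,
      sodtRec rplus splits hperm minE xs rs ∈ genDTs rplus splits hperm xs rs ∧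
      ∀ t ∈ genDTs rplus splits hperm xs rs,
        Eobj f g (sodtRec rplus splits hperm minE xs rs) ≤ Eobj f g t by
    exact H rs.length rs rfl xs
  intro n
  induction n using Nat.strong_induction_on with
  | _ n ih =>
    intro rs hlen xs
    match rs, hlen with
    | [], hlen =>
      constructor
      · simp [sodtRec, genDTs]
      · intro t ht
        simp [genDTs] at ht
        simp [sodtRec, ht]
    | [r], hlen =>
      constructor
      · simp [sodtRec, genDTs]
      · intro t ht
        simp [genDTs] at ht
        simp [sodtRec, ht]
    | r1 :: r2 :: rest, hlen =>
      have hsne : splits (r1 :: r2 :: rest) ≠ [] := hne _ (by simp)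
      set Lst := (splits (r1 :: r2 :: rest)).attach.map (fun p =>
        DTree.node (sodtRec rplus splits hperm minE (inter xs (rplus p.1.2.1)) p.1.1)
          p.1.2.1
          (sodtRec rplus splits hperm minE (inter xs (rplus p.1.2.1)ᶜ) p.1.2.2)) with hLst
      have hLne : Lst ≠ [] := by
        simp [hLst]
        exact hsne
      obtain ⟨hmem, hmin⟩ := hminE Lst hLne
      have hrec : sodtRec rplus splits hperm minE xs (r1 :: r2 :: rest) = minE Lst := by
        rw [sodtRec]
      have hlens : ∀ p ∈ splits (r1 :: r2 :: rest),
          p.1.length < n ∧ p.2.2.length < n := by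
        intro p hp
        have h := (hperm (r1 :: r2 :: rest) (by simp) p hp).length_eq
        simp only [List.length_append, List.length_cons] at h hlen
        omega
      have ihp : ∀ p ∈ splits (r1 :: r2 :: rest), ∀ ys : List X,
          sodtRec rplus splits hperm minE ys p.1 ∈ genDTs rplus splits hperm ys p.1 ∧
          ∀ t ∈ genDTs rplus splits hperm ys p.1,
            Eobj f g (sodtRec rplus splits hperm minE ys p.1) ≤ Eobj f g t := by
        intro p hp ys
        exact ih p.1.length (hlens p hp).1 p.1 rfl ys
      have ihq : ∀ p ∈ splits (r1 :: r2 :: rest), ∀ ys : List X,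
          sodtRec rplus splits hperm minE ys p.2.2 ∈ genDTs rplus splits hperm ys p.2.2 ∧
          ∀ t ∈ genDTs rplus splits hperm ys p.2.2,
            Eobj f g (sodtRec rplus splits hperm minE ys p.2.2) ≤ Eobj f g t := by
        intro p hp ys
        exact ih p.2.2.length (hlens p hp).2 p.2.2 rfl ys
      rw [hrec]
      constructor
      · rw [hLst] at hmem
        simp only [List.mem_map, List.mem_attach, true_and, Subtype.exists] at hmem
        obtain ⟨p, hp, hEq⟩ := hmem
        rw [genDTs]
        simp only [List.mem_flatMap, List.mem_map, List.mem_attach, true_and, Subtype.exists]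
        exact ⟨p, hp, _, (ihp p hp _).1, _, (ihq p hp _).1, hEq⟩
      · intro t ht
        rw [genDTs] at ht
        simp only [List.mem_flatMap, List.mem_map, List.mem_attach, true_and,
          Subtype.exists] at ht
        obtain ⟨p, hp, u, hu, v, hv, hEq⟩ := ht
        have hmemL : DTree.node (sodtRec rplus splits hperm minE (inter xs (rplus p.2.1)) p.1)
            p.2.1 (sodtRec rplus splits hperm minE (inter xs (rplus p.2.1)ᶜ) p.2.2) ∈ Lst := by
          rw [hLst]
          simp only [List.mem_map, List.mem_attach, true_and, Subtype.exists]
          exact ⟨p, hp, rfl⟩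
        refine le_trans (hmin _ hmemL) ?_
        rw [← hEq]
        exact hg _ _ _ _ ((ihp p hp _).2 u hu) ((ihq p hp _).2 v hv)
end

section
/- Assume g is monotone, i.e. a₁ ≤ a₂ and b₁ ≤ b₂ imply g(a₁,b₁) ≤ g(a₂,b₂). Then for every depth d : ℕ and every data list xs over X, the dynamic-programming algorithm odt_depth is correct for the depth-constrained optimal decision tree problem: odt_depth(d, xs) is an element of genDTDs(d, xs), and E(odt_depth(d, xs)) ≤ E(t) for every tree t in genDTDs(d, xs). -/
open Classical

/-- Brute-force generator of all depth-`d` decision trees. -/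
noncomputable def genDTDs {X R : Type*} (rplus : R → Set X)
    (gensplits : List X → List R) : ℕ → List X → List (DTree X R)
  | 0, xs => [DTree.leaf xs]
  | d + 1, xs =>
      (gensplits xs).flatMap fun r =>
        (genDTDs rplus gensplits d (inter xs (rplus r))).flatMap fun u =>
          (genDTDs rplus gensplits d (inter xs (rplus r)ᶜ)).map fun v => DTree.node u r v

/-- Dynamic-programming algorithm for the depth-constrained problem. -/
noncomputable def odtDepth {X R : Type*} (rplus : R → Set X)
    (gensplits : List X → List R) (minE : List (DTree X R) → DTree X R) :
    ℕ → List X → DTree X R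
  | 0, xs => DTree.leaf xs
  | d + 1, xs =>
      minE ((gensplits xs).map fun r =>
        DTree.node (odtDepth rplus gensplits minE d (inter xs (rplus r))) r
          (odtDepth rplus gensplits minE d (inter xs (rplus r)ᶜ)))

/-- correctness of the dynamic-programming algorithm `odt_depth` for the
depth-constrained optimal decision tree problem. -/
theorem stmt3 {X R : Type*} (rplus : R → Set X) (f : List X → ℝ) (g : ℝ → ℝ → ℝ)
    (gensplits : List X → List R) (hgs : ∀ xs : List X, gensplits xs ≠ [])
    (minE : List (DTree X R) → DTree X R)
    (hminE : ∀ l : List (DTree X R), l ≠ [] →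
      minE l ∈ l ∧ ∀ t ∈ l, Eobj f g (minE l) ≤ Eobj f g t)
    (hg : ∀ a₁ a₂ b₁ b₂ : ℝ, a₁ ≤ a₂ → b₁ ≤ b₂ → g a₁ b₁ ≤ g a₂ b₂)
    (d : ℕ) (xs : List X) :
    odtDepth rplus gensplits minE d xs ∈ genDTDs rplus gensplits d xs ∧
    ∀ t ∈ genDTDs rplus gensplits d xs,
      Eobj f g (odtDepth rplus gensplits minE d xs) ≤ Eobj f g t := by
  induction d generalizing xs with
  | zero =>
    constructor
    · simp [odtDepth, genDTDs]
    · intro t ht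
      simp [genDTDs] at ht
      subst ht
      simp [odtDepth]
  | succ d ih =>
    have hne : ((gensplits xs).map fun r =>
        DTree.node (odtDepth rplus gensplits minE d (inter xs (rplus r))) r
          (odtDepth rplus gensplits minE d (inter xs (rplus r)ᶜ))) ≠ [] := by
      simp [hgs xs]
    obtain ⟨hmem, hopt⟩ := hminE _ hne
    constructor
    · rw [odtDepth]
      simp only [List.mem_map] at hmem
      obtain ⟨r, hr, heq⟩ := hmem
      rw [genDTDs]
      simp only [List.mem_flatMap, List.mem_map]
      exact ⟨r, hr, _, (ih _).1, _, (ih _).1, heq⟩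
    · intro t ht
      rw [genDTDs] at ht
      simp only [List.mem_flatMap, List.mem_map] at ht
      obtain ⟨r, hr, u, hu, v, hv, heq⟩ := ht
      subst heq
      have h1 : Eobj f g (odtDepth rplus gensplits minE (d+1) xs) ≤
          Eobj f g (DTree.node (odtDepth rplus gensplits minE d (inter xs (rplus r))) r
            (odtDepth rplus gensplits minE d (inter xs (rplus r)ᶜ))) := by
        rw [odtDepth]
        exact hopt _ (List.mem_map_of_mem hr)
      refine h1.trans ?_
      exact hg _ _ _ _ ((ih _).2 u hu) ((ih _).2 v hv)
end

section
/- Thin-introduction law: let E : α → ℝ, let R : α → α → Prop, let xs be a nonempty list over α, and let ys be a sublist of xs such that (i) for every x in xs there exists y in ys with R y x, and (ii) R a b implies E a ≤ E b for all a, b. Then ys is nonempty and the minimum value of E over ys equals the minimum value of E over xs. -/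
/-- thin-introduction law. If `ys` is a sublist of the nonempty list `xs`
such that every `x ∈ xs` is dominated by some `y ∈ ys` (with `R a b → E a ≤ E b`),
then `ys` is nonempty and the minimum value of `E` over `ys` equals that over `xs`. -/
theorem stmt4 {α : Type*} (E : α → ℝ) (R : α → α → Prop) (xs ys : List α)
    (hxs : xs ≠ []) (hsub : ys.Sublist xs)
    (hthin : ∀ x ∈ xs, ∃ y ∈ ys, R y x)
    (hdom : ∀ a b, R a b → E a ≤ E b) :
    ys ≠ [] ∧ sInf (E '' {x | x ∈ ys}) = sInf (E '' {x | x ∈ xs}) := by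
  obtain ⟨x0, hx0⟩ := List.exists_mem_of_ne_nil xs hxs
  obtain ⟨y0, hy0, _⟩ := hthin x0 hx0
  have hys : ys ≠ [] := fun h => by simp [h] at hy0
  refine ⟨hys, le_antisymm ?_ ?_⟩
  · -- sInf over ys ≤ sInf over xs
    refine le_csInf ⟨E x0, ⟨x0, hx0, rfl⟩⟩ ?_
    rintro _ ⟨x, hx, rfl⟩
    obtain ⟨y, hy, hR⟩ := hthin x hx
    exact csInf_le ((xs.finite_toSet.image E).subset
      (Set.image_mono (f := E) fun a ha => hsub.subset ha)).bddBelow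
      ⟨y, hy, rfl⟩ |>.trans (hdom y x hR)
  · refine le_csInf ⟨E y0, ⟨y0, hy0, rfl⟩⟩ ?_
    rintro _ ⟨y, hy, rfl⟩
    exact csInf_le (xs.finite_toSet.image E).bddBelow ⟨y, hsub.subset hy, rfl⟩
end

section
/- K-means lower bound for regression trees: let x : Fin N → ℝ^D be data points with labels y : Fin N → ℝ, and let K : ℕ. Then for every prediction tree t over ℝ^D with exactly K internal nodes, the squared loss ∑ᵢ (y i − t(x i))² is at least kmeans(K+1, y), the optimal 1-dimensional (K+1)-means clustering cost of the labels. -/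
open Classical

/-- Prediction trees over `ℝ^D`: a leaf carries a real prediction, a node carries two
subtrees and a split, given as a subset `r⁺ ⊆ ℝ^D`. -/
inductive PTree (D : ℕ) where
  | leaf : ℝ → PTree D
  | node : PTree D → Set (Fin D → ℝ) → PTree D → PTree D

/-- The prediction of a tree on a point. -/
noncomputable def PTree.pred {D : ℕ} : PTree D → (Fin D → ℝ) → ℝ
  | .leaf p, _ => p
  | .node u r v, z => if z ∈ r then u.pred z else v.pred z

/-- Number of internal nodes. -/
def PTree.size {D : ℕ} : PTree D → ℕ
  | .leaf _ => 0
  | .node u _ v => u.size + v.size + 1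

/-- Optimal 1-dimensional `k`-means clustering cost of the labels `y`. -/
noncomputable def kmeansCost (N k : ℕ) (y : Fin N → ℝ) : ℝ :=
  sInf {v : ℝ | ∃ (c : Fin N → Fin k) (μ : Fin k → ℝ), v = ∑ i, (y i - μ (c i)) ^ 2}

lemma ptree_leaves {D : ℕ} (t : PTree D) :
    ∃ f : Fin (t.size + 1) → ℝ, ∀ z, ∃ j, t.pred z = f j := by
  induction t with
  | leaf p => exact ⟨fun _ => p, fun z => ⟨0, rfl⟩⟩
  | node u r v ihu ihv =>
    obtain ⟨fu, hu⟩ := ihu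
    obtain ⟨fv, hv⟩ := ihv
    refine ⟨fun j => if h : (j : ℕ) < u.size + 1 then fu ⟨j, h⟩
      else fv ⟨(j : ℕ) - (u.size + 1), by
        have h2 : (j : ℕ) < u.size + v.size + 1 + 1 := j.2; omega⟩, fun z => ?_⟩
    by_cases hz : z ∈ r
    · obtain ⟨j, hj⟩ := hu z
      refine ⟨⟨j, show (j:ℕ) < u.size + v.size + 1 + 1 by have := j.2; omega⟩, ?_⟩
      simp [PTree.pred, hz, j.2, hj]
    · obtain ⟨j, hj⟩ := hv z
      refine ⟨⟨(j : ℕ) + (u.size + 1), show (j:ℕ) + (u.size+1) < u.size + v.size + 1 + 1 by have := j.2; omega⟩, ?_⟩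
      simp only [PTree.pred, hz, if_false]
      rw [dif_neg (by omega)]
      convert hj using 2
      ext
      simp

/-- K-means lower bound for regression trees. -/
theorem stmt8 {N D : ℕ} (K : ℕ) (x : Fin N → Fin D → ℝ) (y : Fin N → ℝ)
    (t : PTree D) (ht : t.size = K) :
    kmeansCost N (K + 1) y ≤ ∑ i, (y i - t.pred (x i)) ^ 2 := by
  subst ht
  obtain ⟨f, hf⟩ := ptree_leaves t
  have hc : ∀ i, ∃ j, t.pred (x i) = f j := fun i => hf (x i)
  choose c hci using hc
  apply csInf_le
  · refine ⟨0, fun v hv => ?_⟩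
    obtain ⟨c', μ, rfl⟩ := hv
    positivity
  · exact ⟨c, f, by simp [hci]⟩
end

section
/- Existence of a vanishing hypersurface: let D, M : ℕ and let S be a finite set of points in ℝ^D with cardinality strictly less than C(D+M, D). Then there exists a nonzero polynomial P ∈ ℝ[x₁, …, x_D] of total degree at most M such that P vanishes at every point of S. -/
open MvPolynomial

lemma aux_finite (D M : ℕ) : Finite {f : Fin D → ℕ // ∑ i, f i ≤ M} := by
  apply Finite.of_injective (fun f (i : Fin D) =>
    (⟨f.1 i, Nat.lt_succ_of_le ((Finset.single_le_sum (fun j _ => Nat.zero_le (f.1 j))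
      (Finset.mem_univ i)).trans f.2)⟩ : Fin (M+1)))
  intro f g h
  ext i
  exact congrArg Fin.val (congrFun h i)

noncomputable def aux_equiv_sym (n M : ℕ) :
    {g : Fin n → ℕ // ∑ i, g i = M} ≃ Sym (Fin n) M := by
  refine Equiv.subtypeEquiv (Finsupp.equivFunOnFinite.symm.trans Multiset.toFinsupp.toEquiv.symm) ?_
  intro g
  simp only [Equiv.trans_apply]
  rw [show (Multiset.toFinsupp.toEquiv.symm (Finsupp.equivFunOnFinite.symm g))
      = (Finsupp.equivFunOnFinite.symm g).toMultiset from rfl]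
  rw [Finsupp.card_toMultiset, Finsupp.sum_fintype _ _ (fun _ => rfl)]
  rfl

lemma aux_card (D M : ℕ) :
    Nat.card {f : Fin D → ℕ // ∑ i, f i ≤ M} = (D + M).choose D := by
  have e1 : {f : Fin D → ℕ // ∑ i, f i ≤ M} ≃ {g : Fin (D+1) → ℕ // ∑ i, g i = M} := by
    refine ⟨fun f => ⟨Fin.cons (M - ∑ i, f.1 i) f.1, ?_⟩,
      fun g => ⟨Fin.tail g.1, ?_⟩, ?_, ?_⟩
    · rw [Fin.sum_cons]; exact Nat.sub_add_cancel f.2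
    · have := g.2
      rw [← Fin.cons_self_tail g.1, Fin.sum_cons] at this
      omega
    · intro f; ext i; simp [Fin.tail_cons]
    · intro g
      have h2 := g.2
      rw [← Fin.cons_self_tail g.1, Fin.sum_cons] at h2
      ext i
      simp only
      rw [show M - ∑ i, Fin.tail g.1 i = g.1 0 by omega, Fin.cons_self_tail]
  rw [Nat.card_congr (e1.trans (aux_equiv_sym (D+1) M)), Nat.card_eq_fintype_card,
    Sym.card_sym_eq_choose]
  rw [show Fintype.card (Fin (D+1)) + M - 1 = D + M by rw [Fintype.card_fin]; omega]
  rw [← Nat.choose_symm (Nat.le_add_left M D)]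
  congr 1
  omega

lemma aux_finrank (D M : ℕ) :
    Module.finrank ℝ (restrictTotalDegree (Fin D) ℝ M) = (D + M).choose D := by
  have e : {n : Fin D →₀ ℕ // (n.sum fun _ e => e) ≤ M} ≃ {f : Fin D → ℕ // ∑ i, f i ≤ M} := by
    refine Equiv.subtypeEquiv Finsupp.equivFunOnFinite ?_
    intro n
    rw [Finsupp.sum_fintype _ _ (fun _ => rfl)]
    rfl
  haveI : Finite ↑{ n : Fin D →₀ ℕ | (n.sum fun _ e => e) ≤ M } := by
    haveI := aux_finite D M
    exact Finite.of_equiv _ e.symm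
  haveI : Fintype ↑{ n : Fin D →₀ ℕ | (n.sum fun _ e => e) ≤ M } := Fintype.ofFinite _
  have b := MvPolynomial.basisRestrictSupport ℝ { n : Fin D →₀ ℕ | (n.sum fun _ e => e) ≤ M }
  show Module.finrank ℝ (MvPolynomial.restrictSupport ℝ
    { n : Fin D →₀ ℕ | (n.sum fun _ e => e) ≤ M }) = (D + M).choose D
  rw [Module.finrank_eq_card_basis b, ← Nat.card_eq_fintype_card]
  rw [show Nat.card ↑{ n : Fin D →₀ ℕ | (n.sum fun _ e => e) ≤ M }
      = Nat.card {n : Fin D →₀ ℕ // (n.sum fun _ e => e) ≤ M} from rfl,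
    Nat.card_congr e, aux_card]

/-- existence of a vanishing hypersurface. If a finite set `S ⊆ ℝ^D` has
fewer than `(D + M).choose D` points, there is a nonzero polynomial of total degree at
most `M` vanishing on `S`. -/
theorem stmt10 (D M : ℕ) (S : Finset (Fin D → ℝ))
    (hS : S.card < (D + M).choose D) :
    ∃ P : MvPolynomial (Fin D) ℝ, P ≠ 0 ∧ P.totalDegree ≤ M ∧
      ∀ x ∈ S, MvPolynomial.eval x P = 0 := by
  set V := restrictTotalDegree (Fin D) ℝ M
  let L : V →ₗ[ℝ] (S → ℝ) := LinearMap.pi fun x : S =>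
    ((MvPolynomial.aeval (x : Fin D → ℝ) : MvPolynomial (Fin D) ℝ →ₐ[ℝ] ℝ).toLinearMap.comp
      V.subtype)
  have hker : LinearMap.ker L ≠ ⊥ := by
    intro h
    have hinj : Function.Injective L := LinearMap.ker_eq_bot.mp h
    have h1 : Module.finrank ℝ V ≤ Module.finrank ℝ (S → ℝ) :=
      LinearMap.finrank_le_finrank_of_injective hinj
    rw [aux_finrank D M] at h1
    have h2 : Module.finrank ℝ (S → ℝ) = S.card := by
      rw [Module.finrank_pi, Fintype.card_coe]
    omega
  obtain ⟨p, hp, hp0⟩ := Submodule.exists_mem_ne_zero_of_ne_bot hker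
  refine ⟨p.1, ?_, (MvPolynomial.mem_restrictTotalDegree _ _ _).mp p.2, ?_⟩
  · intro h
    exact hp0 (Subtype.ext h)
  · intro x hx
    have := congrFun (LinearMap.mem_ker.mp hp) ⟨x, hx⟩
    have heq : MvPolynomial.aeval (R := ℝ) x p.1 = MvPolynomial.eval x p.1 := by
      rw [← MvPolynomial.coe_aeval_eq_eval]; rfl
    rw [← heq]
    exact this
end
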